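/- Let C be a coalgebra in an abelian monoidal category M with left exact tensor functors, let L be a C-bicomodule, and let f : C → L be a morphism of C-bicomodules (where C is a bicomodule over itself via its comultiplication). Then the kernel D = Ker(f) carries a natural coalgebra structure such that the kernel inclusion δ : D → C is a morphism of coalgebras. -/

import Mathlib

open CategoryTheory CategoryTheory.Limits MonoidalCategory

universe v u

variable {M : Type u} [Category.{v} M] [MonoidalCategory M] [Abelian M]

/-- A bicomodule over a comonoid `C` in a monoidal category. -/
structure Bicomod (C : Comon M) where
  L : M
  ρl : L ⟶ C.X ⊗ L
  ρr : L ⟶ L ⊗ C.X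
  ρl_counit : ρl ≫ (C.comon.counit ▷ L) = (λ_ L).inv
  ρr_counit : ρr ≫ (L ◁ C.comon.counit) = (ρ_ L).inv
  ρl_coassoc : ρl ≫ (C.comon.comul ▷ L) = ρl ≫ (C.X ◁ ρl) ≫ (α_ C.X C.X L).inv
  ρr_coassoc : ρr ≫ (ρr ▷ C.X) = ρr ≫ (L ◁ C.comon.comul) ≫ (α_ L C.X C.X).inv
  bicomod : ρr ≫ (ρl ▷ C.X) ≫ (α_ C.X L C.X).hom = ρl ≫ (C.X ◁ ρr)

section Aux

lemma aux_mono_whiskerRight [∀ X : M, PreservesFiniteLimits (tensorRight X)]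
    {A B : M} (f : A ⟶ B) [Mono f] (X : M) : Mono (f ▷ X) := by
  have : Mono ((tensorRight X).map f) := (tensorRight X).map_mono f
  simpa using this

lemma aux_mono_whiskerLeft [∀ X : M, PreservesFiniteLimits (tensorLeft X)]
    {A B : M} (X : M) (f : A ⟶ B) [Mono f] : Mono (X ◁ f) := by
  have : Mono ((tensorLeft X).map f) := (tensorLeft X).map_mono f
  simpa using this

lemma aux_mono_tensorHom [∀ X : M, PreservesFiniteLimits (tensorLeft X)]
    [∀ X : M, PreservesFiniteLimits (tensorRight X)]
    {A B A' B' : M} (f : A ⟶ B) (g : A' ⟶ B') [Mono f] [Mono g] : Mono (f ⊗ₘ g) := by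
  rw [MonoidalCategory.tensorHom_def]
  have h1 := aux_mono_whiskerRight f A'
  have h2 := aux_mono_whiskerLeft B g
  exact mono_comp _ _

lemma aux_factor_right [∀ X : M, PreservesFiniteLimits (tensorRight X)]
    {A B X T : M} (f : A ⟶ B) (u : T ⟶ A ⊗ X) (h : u ≫ (f ▷ X) = 0) :
    ∃ v : T ⟶ kernel f ⊗ X, v ≫ (kernel.ι f ▷ X) = u := by
  have h' : u ≫ (tensorRight X).map f = 0 := by simpa using h
  refine ⟨kernel.lift ((tensorRight X).map f) u h' ≫
      (PreservesKernel.iso (tensorRight X) f).inv, ?_⟩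
  have key : (PreservesKernel.iso (tensorRight X) f).inv ≫ (tensorRight X).map (kernel.ι f)
      = kernel.ι ((tensorRight X).map f) := by
    rw [Iso.inv_comp_eq, PreservesKernel.iso_hom, kernelComparison_comp_ι]
  have : kernel.ι f ▷ X = (tensorRight X).map (kernel.ι f) := rfl
  rw [this, Category.assoc, key, kernel.lift_ι]

lemma aux_factor_left [∀ X : M, PreservesFiniteLimits (tensorLeft X)]
    {A B X T : M} (f : A ⟶ B) (u : T ⟶ X ⊗ A) (h : u ≫ (X ◁ f) = 0) :
    ∃ v : T ⟶ X ⊗ kernel f, v ≫ (X ◁ kernel.ι f) = u := by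
  have h' : u ≫ (tensorLeft X).map f = 0 := by simpa using h
  refine ⟨kernel.lift ((tensorLeft X).map f) u h' ≫
      (PreservesKernel.iso (tensorLeft X) f).inv, ?_⟩
  have key : (PreservesKernel.iso (tensorLeft X) f).inv ≫ (tensorLeft X).map (kernel.ι f)
      = kernel.ι ((tensorLeft X).map f) := by
    rw [Iso.inv_comp_eq, PreservesKernel.iso_hom, kernelComparison_comp_ι]
  have : X ◁ kernel.ι f = (tensorLeft X).map (kernel.ι f) := rfl
  rw [this, Category.assoc, key, kernel.lift_ι]

end Aux

/-- If `C` is a coalgebra in an abelian monoidal category with left exact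
tensor functors, `L` a `C`-bicomodule, and `f : C ⟶ L` a morphism of `C`-bicomodules
(with `C` a bicomodule over itself via its comultiplication), then the kernel of `f` carries
a natural coalgebra structure for which the kernel inclusion is a coalgebra morphism. -/
theorem stmt0
    [∀ X : M, PreservesFiniteLimits (tensorLeft X)]
    [∀ X : M, PreservesFiniteLimits (tensorRight X)]
    (C : Comon M) (L : Bicomod C) (f : C.X ⟶ L.L)
    (hl : f ≫ L.ρl = C.comon.comul ≫ (C.X ◁ f))
    (hr : f ≫ L.ρr = C.comon.comul ≫ (f ▷ C.X)) :
    ∃ (Δ : kernel f ⟶ kernel f ⊗ kernel f) (ε : kernel f ⟶ 𝟙_ M),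
      Δ ≫ (Δ ▷ kernel f) ≫ (α_ (kernel f) (kernel f) (kernel f)).hom
          = Δ ≫ (kernel f ◁ Δ) ∧
      Δ ≫ (ε ▷ kernel f) = (λ_ (kernel f)).inv ∧
      Δ ≫ (kernel f ◁ ε) = (ρ_ (kernel f)).inv ∧
      kernel.ι f ≫ C.comon.comul = Δ ≫ (kernel.ι f ⊗ₘ kernel.ι f) ∧
      kernel.ι f ≫ C.comon.counit = ε := by
  set D := kernel f
  set δ : D ⟶ C.X := kernel.ι f with hδ
  -- Step A : δ ≫ comul kills f ▷ C.X
  have hA : (δ ≫ C.comon.comul) ≫ (f ▷ C.X) = 0 := by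
    rw [Category.assoc, ← hr, ← Category.assoc, kernel.condition, zero_comp]
  obtain ⟨g, hg⟩ := aux_factor_right f (δ ≫ C.comon.comul) hA
  -- Step B : g kills D ◁ f
  have hB : g ≫ (D ◁ f) = 0 := by
    have m : Mono (δ ▷ L.L) := aux_mono_whiskerRight δ L.L
    rw [← cancel_mono (δ ▷ L.L), zero_comp, Category.assoc, whisker_exchange,
      ← Category.assoc, hg, Category.assoc, ← hl, ← Category.assoc, kernel.condition, zero_comp]
  obtain ⟨Δ, hΔ'⟩ := aux_factor_left f g hB
  have hΔ : Δ ≫ (δ ⊗ₘ δ) = δ ≫ C.comon.comul := by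
    rw [tensorHom_def', ← Category.assoc, hΔ', hg]
  have hΔr : ∀ {Z : M} (h : C.X ⊗ C.X ⟶ Z), Δ ≫ (δ ⊗ₘ δ) ≫ h = δ ≫ C.comon.comul ≫ h := by
    intro Z h; rw [← Category.assoc, hΔ, Category.assoc]
  refine ⟨Δ, δ ≫ C.comon.counit, ?_, ?_, ?_, hΔ.symm, rfl⟩
  · -- coassociativity
    haveI : Mono (δ ⊗ₘ δ) := aux_mono_tensorHom δ δ
    have m : Mono (δ ⊗ₘ (δ ⊗ₘ δ)) := aux_mono_tensorHom δ (δ ⊗ₘ δ)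
    rw [← cancel_mono (δ ⊗ₘ (δ ⊗ₘ δ))]
    calc (Δ ≫ (Δ ▷ D) ≫ (α_ D D D).hom) ≫ (δ ⊗ₘ (δ ⊗ₘ δ))
        = Δ ≫ (Δ ▷ D) ≫ ((δ ⊗ₘ δ) ⊗ₘ δ) ≫ (α_ C.X C.X C.X).hom := by
          simp only [Category.assoc, associator_naturality]; rfl
      _ = Δ ≫ ((Δ ≫ (δ ⊗ₘ δ)) ⊗ₘ (𝟙 D ≫ δ)) ≫ (α_ C.X C.X C.X).hom := by
          simp only [← tensorHom_id, tensorHom_comp_tensorHom_assoc]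
      _ = Δ ≫ ((δ ≫ C.comon.comul) ⊗ₘ δ) ≫ (α_ C.X C.X C.X).hom := by
          rw [hΔ, Category.id_comp]
      _ = Δ ≫ ((δ ≫ C.comon.comul) ⊗ₘ (δ ≫ 𝟙 C.X)) ≫ (α_ C.X C.X C.X).hom := by
          rw [Category.comp_id]
      _ = Δ ≫ (δ ⊗ₘ δ) ≫ (C.comon.comul ⊗ₘ 𝟙 C.X) ≫ (α_ C.X C.X C.X).hom := by
          rw [← tensorHom_comp_tensorHom_assoc]
      _ = δ ≫ C.comon.comul ≫ (C.comon.comul ⊗ₘ 𝟙 C.X) ≫ (α_ C.X C.X C.X).hom := by rw [hΔr]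
      _ = δ ≫ C.comon.comul ≫ (C.comon.comul ▷ C.X) ≫ (α_ C.X C.X C.X).hom := by rw [tensorHom_id]
      _ = δ ≫ C.comon.comul ≫ (C.X ◁ C.comon.comul) := by rw [← ComonObj.comul_assoc (self := C.comon) C.X]
      _ = δ ≫ C.comon.comul ≫ (𝟙 C.X ⊗ₘ C.comon.comul) := by rw [id_tensorHom]
      _ = Δ ≫ (δ ⊗ₘ δ) ≫ (𝟙 C.X ⊗ₘ C.comon.comul) := by rw [hΔr]
      _ = Δ ≫ ((δ ≫ 𝟙 C.X) ⊗ₘ (δ ≫ C.comon.comul)) := by rw [← tensorHom_comp_tensorHom]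
      _ = Δ ≫ (δ ⊗ₘ (δ ≫ C.comon.comul)) := by rw [Category.comp_id]
      _ = Δ ≫ (δ ⊗ₘ (Δ ≫ (δ ⊗ₘ δ))) := by rw [hΔ]
      _ = (Δ ≫ (D ◁ Δ)) ≫ (δ ⊗ₘ (δ ⊗ₘ δ)) := by
          simp only [← id_tensorHom, tensorHom_comp_tensorHom, Category.id_comp, Category.assoc]
  · -- left counit
    have m : Mono ((𝟙_ M) ◁ δ) := aux_mono_whiskerLeft _ δ
    rw [← cancel_mono ((𝟙_ M) ◁ δ)]
    calc (Δ ≫ ((δ ≫ C.comon.counit) ▷ D)) ≫ ((𝟙_ M) ◁ δ)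
        = Δ ≫ ((δ ≫ C.comon.counit) ⊗ₘ δ) := by
          simp only [← tensorHom_id, ← id_tensorHom, tensorHom_comp_tensorHom, Category.assoc,
            Category.id_comp, Category.comp_id]
      _ = Δ ≫ ((δ ≫ C.comon.counit) ⊗ₘ (δ ≫ 𝟙 C.X)) := by rw [Category.comp_id]
      _ = Δ ≫ (δ ⊗ₘ δ) ≫ (C.comon.counit ⊗ₘ 𝟙 C.X) := by rw [← tensorHom_comp_tensorHom]
      _ = δ ≫ C.comon.comul ≫ (C.comon.counit ⊗ₘ 𝟙 C.X) := by rw [hΔr]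
      _ = δ ≫ C.comon.comul ≫ (C.comon.counit ▷ C.X) := by rw [tensorHom_id]
      _ = δ ≫ (λ_ C.X).inv := by rw [ComonObj.counit_comul (self := C.comon) C.X]
      _ = (λ_ D).inv ≫ ((𝟙_ M) ◁ δ) := by rw [leftUnitor_inv_naturality]
  · -- right counit
    have m : Mono (δ ▷ (𝟙_ M)) := aux_mono_whiskerRight δ _
    rw [← cancel_mono (δ ▷ (𝟙_ M))]
    calc (Δ ≫ (D ◁ (δ ≫ C.comon.counit))) ≫ (δ ▷ (𝟙_ M))
        = Δ ≫ (δ ⊗ₘ (δ ≫ C.comon.counit)) := by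
          simp only [← tensorHom_id, ← id_tensorHom, tensorHom_comp_tensorHom, Category.assoc,
            Category.id_comp, Category.comp_id]
      _ = Δ ≫ ((δ ≫ 𝟙 C.X) ⊗ₘ (δ ≫ C.comon.counit)) := by rw [Category.comp_id]
      _ = Δ ≫ (δ ⊗ₘ δ) ≫ (𝟙 C.X ⊗ₘ C.comon.counit) := by rw [← tensorHom_comp_tensorHom]
      _ = δ ≫ C.comon.comul ≫ (𝟙 C.X ⊗ₘ C.comon.counit) := by rw [hΔr]
      _ = δ ≫ C.comon.comul ≫ (C.X ◁ C.comon.counit) := by rw [id_tensorHom]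
      _ = δ ≫ (ρ_ C.X).inv := by rw [ComonObj.comul_counit (self := C.comon) C.X]
      _ = (ρ_ D).inv ≫ (δ ▷ (𝟙_ M)) := by rw [rightUnitor_inv_naturality]
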